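/- Contragredient duality: if q is a queue and u is a word of length n with ℓ classes, then (q(u))* = q*(u*); that is, for all sites i, q(u)_i = ℓ + 2 − q*(u*)_{n+1−i}. -/

import Mathlib

open scoped BigOperators Classical

namespace MLQ

/-- Words of length `n` over the positive integers (letters are natural numbers,
with `0` unused). Sites are elements of `Fin n`, thought of cyclically. -/
abbrev Word (n : ℕ) := Fin n → ℕ

variable {n : ℕ}

section Cyclic

variable [NeZero n]

/-- the site `s` steps (cyclically) to the right of `i` -/
def shiftR (i : Fin n) (s : ℕ) : Fin n :=
  ⟨(i.val + s) % n, Nat.mod_lt _ (Nat.pos_of_ne_zero (NeZero.ne n))⟩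

/-- the site `s` steps (cyclically) to the left of `i` -/
def shiftL (i : Fin n) (s : ℕ) : Fin n :=
  ⟨(i.val + n - s % n) % n, Nat.mod_lt _ (Nat.pos_of_ne_zero (NeZero.ne n))⟩

/-- number of steps to go (cyclically) right from `i` to `j` -/
def cdistR (i j : Fin n) : ℕ := (j.val + n - i.val) % n

/-- number of steps to go (cyclically) left from `i` to `j` -/
def cdistL (i j : Fin n) : ℕ := (i.val + n - j.val) % n

/-- first site of `s` weakly to the right (cyclically) of `i` -/
noncomputable def firstRight (i : Fin n) (s : Finset (Fin n)) (h : s.Nonempty) : Fin n :=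
  shiftR i ((s.image (cdistR i)).min' (h.image _))

/-- first site of `s` weakly to the left (cyclically) of `i` -/
noncomputable def firstLeft (i : Fin n) (s : Finset (Fin n)) (h : s.Nonempty) : Fin n :=
  shiftL i ((s.image (cdistL i)).min' (h.image _))

/-- One step of Phase II of the queue algorithm: the state consists of the set of
still-unset sites of the queue together with the partial output word; processing
the letter at site `σ p`, it is placed (unchanged) on the first unset queue site
weakly to the right of `σ p`. -/
noncomputable def step2 (u : Word n) (σ : Equiv.Perm (Fin n))
    (st : Finset (Fin n) × Word n) (p : Fin n) : Finset (Fin n) × Word n :=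
  if h : st.1.Nonempty then
    let j := firstRight (σ p) st.1 h
    (st.1.erase j, Function.update st.2 j (u (σ p)))
  else st

/-- One step of Phase I of the queue algorithm: processing the letter at site `σ p`,
the letter `u (σ p) + 1` is placed on the first unset non-queue site weakly to the
left of `σ p`. -/
noncomputable def step1 (u : Word n) (σ : Equiv.Perm (Fin n))
    (st : Finset (Fin n) × Word n) (p : Fin n) : Finset (Fin n) × Word n :=
  if h : st.1.Nonempty then
    let j := firstLeft (σ p) st.1 h
    (st.1.erase j, Function.update st.2 j (u (σ p) + 1))
  else st

/-- The two-phase queue algorithm computing `q(u)`, using the ordering permutation `σ`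
(so the letters are processed in the order `u (σ 0), u (σ 1), …`): Phase II processes
the `|q|` smallest letters in increasing order, Phase I processes the remaining
letters in decreasing order. -/
noncomputable def queueActWith (q : Finset (Fin n)) (σ : Equiv.Perm (Fin n))
    (u : Word n) : Word n :=
  let s2 := ((List.finRange n).take q.card).foldl (step2 u σ) (q, fun _ => 0)
  let s1 := (((List.finRange n).drop q.card).reverse).foldl (step1 u σ) (qᶜ, s2.2)
  s1.2

/-- `σ` is a valid ordering permutation for the word `u`. -/
def IsSorting (u : Word n) (σ : Equiv.Perm (Fin n)) : Prop := Monotone (u ∘ σ)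

/-- The action `q(u)` of a queue `q` on a word `u`, using the canonical sorting
permutation. -/
noncomputable def act (q : Finset (Fin n)) (u : Word n) : Word n :=
  queueActWith q (Tuple.sort u) u

/-- The action of a tuple of queues `(q_1, …, q_k)` on a word (first `q_1`, then `q_2`, …). -/
noncomputable def mlqAct {k : ℕ} (qs : Fin k → Finset (Fin n)) (u : Word n) : Word n :=
  (List.ofFn qs).foldl (fun w q => act q w) u

end Cyclic

/-- the type of a word: `typeOf u i` is the number of occurrences of the letter `i`. -/
def typeOf (u : Word n) : ℕ → ℕ := fun i => (Finset.univ.filter (fun p => u p = i)).card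

/-- partial sums `p_i(m) = m_1 + ⋯ + m_i` of a type -/
def psum (m : ℕ → ℕ) (i : ℕ) : ℕ := ∑ j ∈ Finset.Icc 1 i, m j

/-- number of classes of a type: the largest `i` with `m i ≠ 0` -/
noncomputable def classes (m : ℕ → ℕ) : ℕ := sSup {i | m i ≠ 0}

/-- a packed word: all classes `1, …, ℓ` occur, where `ℓ` is the number of classes -/
def PackedWord (u : Word n) : Prop :=
  (∀ p, 1 ≤ u p) ∧ ∀ j, 1 ≤ j → j ≤ classes (typeOf u) → typeOf u j ≠ 0

/-- merging classes `i` and `i+1` in a word: all letters `> i` are decremented -/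
def mergeWord (i : ℕ) (u : Word n) : Word n := fun p => if i < u p then u p - 1 else u p

/-- merging classes `i` and `i+1` in a type -/
def mergeType (i : ℕ) (m : ℕ → ℕ) : ℕ → ℕ := fun j =>
  if j < i then m j else if j = i then m i + m (i + 1) else m (j + 1)

/-- `∨^(k)`: decrement all but the `k` smallest letters of a word (meaningful when
`k` is a partial sum of the type of the word). -/
def vee (k : ℕ) (u : Word n) : Word n := fun p =>
  if (Finset.univ.filter (fun q => u q ≤ u p)).card ≤ k then u p else u p - 1

/-- iterated merge `∨_T` (the merges `∨_t` are applied for `t ∈ T` in decreasing order) -/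
def mergeWordT (T : Finset ℕ) (u : Word n) : Word n :=
  (T.sort (· ≤ ·)).foldr mergeWord u

/-- iterated merge `∨_T` on types -/
def mergeTypeT (T : Finset ℕ) (m : ℕ → ℕ) : ℕ → ℕ :=
  (T.sort (· ≤ ·)).foldr mergeType m

/-- the weight of a queue, `∏_{j ∈ q} x_j` -/
noncomputable def qwt (q : Finset (Fin n)) : MvPolynomial (Fin n) ℤ :=
  ∏ j ∈ q, MvPolynomial.X j

/-- the `σ`-twisted spectral weight `⟨u⟩_σ` of a word `u`, with respect to a type `m`
with `k + 1` classes: the sum of the weights of all `σ`-twisted multiline queues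
`(q_1, …, q_k)` of type `m` (i.e. `|q_i| = p_{σ(i)}(m)`) with `u = q(1^n)`. -/
noncomputable def swt [NeZero n] (k : ℕ) (m : ℕ → ℕ) (σ : Equiv.Perm (Fin k))
    (u : Word n) : MvPolynomial (Fin n) ℤ :=
  ∑ qs ∈ Finset.univ.filter (fun qs : Fin k → Finset (Fin n) =>
      (∀ i, (qs i).card = psum m ((σ i : ℕ) + 1)) ∧ mlqAct qs (fun _ => 1) = u),
    ∏ i, qwt (qs i)

/-- the (ordinary) spectral weight `⟨u⟩` of a packed word -/
noncomputable def spec [NeZero n] (u : Word n) : MvPolynomial (Fin n) ℤ :=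
  swt (classes (typeOf u) - 1) (typeOf u) (Equiv.refl _) u

/-- the elementary symmetric polynomial `e_k(x_1, …, x_n)` -/
noncomputable def esym (n k : ℕ) : MvPolynomial (Fin n) ℤ :=
  ∑ t ∈ Finset.powersetCard k (Finset.univ : Finset (Fin n)), ∏ j ∈ t, MvPolynomial.X j

/-- the Gale order `A ⪰ B`: same cardinality, and the `k`-th largest element of `A`
is at least the `k`-th largest element of `B`, for every `k` -/
def Dom (A B : Finset ℕ) : Prop :=
  A.card = B.card ∧ ∀ k < A.card,
    (B.sort (· ≤ ·)).reverse.getD k 0 ≤ (A.sort (· ≤ ·)).reverse.getD k 0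

/-- `A ≫ B`: every element of `A` exceeds every element of `B` -/
def Gg (A B : Finset ℕ) : Prop := ∀ a ∈ A, ∀ b ∈ B, b < a

/-- a word is weakly decreasing up to level `t`: any two sites `p < q` with
`u q ≤ t` satisfy `u p ≥ u q` -/
def WDUpTo (t : ℕ) (u : Word n) : Prop :=
  ∀ p q : Fin n, p < q → u q ≤ t → u q ≤ u p

section Dual

variable [NeZero n]

/-- the cyclic interval `{i, i+1, …, i+t}` -/
def cycInterval (i : Fin n) (t : ℕ) : Finset (Fin n) :=
  (Finset.range (t + 1)).image (shiftR i)

/-- the cyclic interval starting at `i` of length `t` is balanced for the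
configuration `(q₁, q₂)` -/
def BalancedInterval (q1 q2 : Finset (Fin n)) (i : Fin n) (t : ℕ) : Prop :=
  (cycInterval i t ∩ q1).card = (cycInterval i t ∩ q2).card ∧
  ∀ l ≤ t, (cycInterval i l ∩ q2).card ≤ (cycInterval i l ∩ q1).card

/-- a site is balanced if it lies in some balanced interval; equivalently, its
parenthesis (if any) is matched in the cyclic parenthesis-matching of the
configuration -/
def BalancedSite (q1 q2 : Finset (Fin n)) (j : Fin n) : Prop :=
  ∃ i t, t < n ∧ BalancedInterval q1 q2 i t ∧ j ∈ cycInterval i t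

/-- the dual configuration: balanced sites keep their memberships, unbalanced
sites swap their memberships between the two queues -/
noncomputable def dualPair (q1 q2 : Finset (Fin n)) : Finset (Fin n) × Finset (Fin n) :=
  (Finset.univ.filter (fun j => if BalancedSite q1 q2 j then j ∈ q1 else j ∈ q2),
   Finset.univ.filter (fun j => if BalancedSite q1 q2 j then j ∈ q2 else j ∈ q1))

/-- the operator `s_i` on tuples of queues, replacing the (0-indexed) adjacent pair
`(q_i, q_{i+1})` by its dual configuration -/
noncomputable def sOp {k : ℕ} (i : ℕ) (qs : Fin k → Finset (Fin n)) :
    Fin k → Finset (Fin n) := fun j =>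
  if h : i + 1 < k then
    (if j.val = i then (dualPair (qs ⟨i, by omega⟩) (qs ⟨i + 1, h⟩)).1
     else if j.val = i + 1 then (dualPair (qs ⟨i, by omega⟩) (qs ⟨i + 1, h⟩)).2
     else qs j)
  else qs j

end Dual


/-- the site `n + 1 - i` (in one-indexed terms): reflection through the middle of `[n]` -/
def rev {n : ℕ} (i : Fin n) : Fin n := ⟨n - 1 - i.val, by have := i.isLt; omega⟩

/-- the contragredient dual queue: `i ∈ q*` iff `n + 1 - i ∉ q` -/
def dualQueue {n : ℕ} (q : Finset (Fin n)) : Finset (Fin n) :=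
  Finset.univ.filter (fun i => rev i ∉ q)

/-- the contragredient dual word (of a word with `ℓ` classes): `u*_i = ℓ + 1 - u_{n+1-i}` -/
def dualWord {n : ℕ} (ℓ : ℕ) (u : Word n) : Word n := fun i => ℓ + 1 - u (rev i)


/-! ### Auxiliary development for contragredient duality -/

section ContraDualAux

variable {n : ℕ}

lemma rev_rev (i : Fin n) : rev (rev i) = i := by
  have := i.isLt
  apply Fin.ext
  simp only [rev]
  omega

lemma rev_involutive : Function.Involutive (rev (n := n)) := rev_rev

lemma rev_injective : Function.Injective (rev (n := n)) := rev_involutive.injective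

lemma rev_lt_rev {i j : Fin n} (h : i < j) : rev j < rev i := by
  have hi := i.isLt; have hj := j.isLt
  rw [Fin.lt_def] at *
  simp only [rev]
  omega

lemma image_rev_rev (s : Finset (Fin n)) : (s.image rev).image rev = s := by
  rw [Finset.image_image]
  have : rev ∘ rev = (id : Fin n → Fin n) := funext rev_rev
  rw [this, Finset.image_id]

variable [NeZero n]

set_option linter.unusedSectionVars false

lemma npos' : 0 < n := Nat.pos_of_ne_zero (NeZero.ne n)

lemma mod_split {x : ℕ} (hx : x < 2 * n) : x % n = if x < n then x else x - n := by
  by_cases h : x < n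
  · rw [if_pos h, Nat.mod_eq_of_lt h]
  · rw [if_neg h, Nat.mod_eq_sub_mod (le_of_not_gt h),
      Nat.mod_eq_of_lt (by omega : x - n < n)]

lemma shiftR_cdistR (p j : Fin n) : shiftR p (cdistR p j) = j := by
  have hn := npos' (n := n); have hp := p.isLt; have hj := j.isLt
  apply Fin.ext
  simp only [shiftR, cdistR]
  rw [Nat.add_mod_mod]
  have h2 : p.val + (j.val + n - p.val) = j.val + n := by omega
  rw [h2, Nat.add_mod_right, Nat.mod_eq_of_lt hj]

lemma shiftL_cdistL (p j : Fin n) : shiftL p (cdistL p j) = j := by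
  have hn := npos' (n := n); have hp := p.isLt; have hj := j.isLt
  apply Fin.ext
  simp only [shiftL, cdistL]
  have hd : (p.val + n - j.val) % n < n := Nat.mod_lt _ hn
  rw [Nat.mod_eq_of_lt hd, mod_split (by omega : p.val + n - j.val < 2 * n)]
  by_cases hpj : p.val + n - j.val < n
  · rw [if_pos hpj]
    have h3 : p.val + n - (p.val + n - j.val) = j.val := by omega
    rw [h3, Nat.mod_eq_of_lt hj]
  · rw [if_neg hpj]
    have h3 : p.val + n - (p.val + n - j.val - n) = n + j.val := by omega
    rw [h3, Nat.add_mod_left, Nat.mod_eq_of_lt hj]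

lemma rev_shiftR (p : Fin n) (d : ℕ) : rev (shiftR p d) = shiftL (rev p) d := by
  have hn := npos' (n := n); have hp := p.isLt
  apply Fin.ext
  simp only [rev, shiftR, shiftL]
  have hd : d % n < n := Nat.mod_lt _ hn
  have h1 : (p.val + d) % n = (p.val + d % n) % n := (Nat.add_mod_mod _ _ _).symm
  rw [h1, mod_split (by omega : p.val + d % n < 2 * n),
    mod_split (by omega : n - 1 - p.val + n - d % n < 2 * n)]
  split_ifs <;> omega

lemma cdistL_rev (p j : Fin n) : cdistL (rev p) (rev j) = cdistR p j := by
  have hp := p.isLt; have hj := j.isLt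
  simp only [cdistL, cdistR, rev]
  congr 1
  omega

lemma min'_congr' {α : Type*} [LinearOrder α] {s t : Finset α} (h : s = t) (hs : s.Nonempty) :
    s.min' hs = t.min' (h ▸ hs) := by subst h; rfl

lemma firstRight_mem (p : Fin n) (S : Finset (Fin n)) (h : S.Nonempty) :
    firstRight p S h ∈ S := by
  obtain ⟨j, hj, hd⟩ := Finset.mem_image.mp (Finset.min'_mem (S.image (cdistR p)) (h.image _))
  unfold firstRight
  rw [← hd, shiftR_cdistR]
  exact hj

lemma firstLeft_mem (p : Fin n) (S : Finset (Fin n)) (h : S.Nonempty) :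
    firstLeft p S h ∈ S := by
  obtain ⟨j, hj, hd⟩ := Finset.mem_image.mp (Finset.min'_mem (S.image (cdistL p)) (h.image _))
  unfold firstLeft
  rw [← hd, shiftL_cdistL]
  exact hj

lemma firstLeft_rev (p : Fin n) (S : Finset (Fin n)) (h : S.Nonempty)
    (h' : (S.image rev).Nonempty) :
    firstLeft (rev p) (S.image rev) h' = rev (firstRight p S h) := by
  unfold firstLeft firstRight
  have him : (S.image rev).image (cdistL (rev p)) = S.image (cdistR p) := by
    rw [Finset.image_image]
    exact Finset.image_congr (fun j _ => cdistL_rev p j)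
  have hmin : ((S.image rev).image (cdistL (rev p))).min' (h'.image _)
      = (S.image (cdistR p)).min' (h.image _) := min'_congr' him _
  rw [rev_shiftR, hmin]

/-- generic one step of the queue algorithms -/
noncomputable def stepG (pick : (j : Fin n) → (s : Finset (Fin n)) → s.Nonempty → Fin n)
    (f : Word n) (st : Finset (Fin n) × Word n) (j : Fin n) : Finset (Fin n) × Word n :=
  if h : st.1.Nonempty then
    (st.1.erase (pick j st.1 h), Function.update st.2 (pick j st.1 h) (f j))
  else st

noncomputable def pickR : (j : Fin n) → (s : Finset (Fin n)) → s.Nonempty → Fin n :=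
  fun j s h => firstRight j s h

noncomputable def pickL : (j : Fin n) → (s : Finset (Fin n)) → s.Nonempty → Fin n :=
  fun j s h => firstLeft j s h

lemma pickR_mem : ∀ (j : Fin n) s h, pickR j s h ∈ s := fun j s h => firstRight_mem j s h

lemma pickL_mem : ∀ (j : Fin n) s h, pickL j s h ∈ s := fun j s h => firstLeft_mem j s h

variable {pick : (j : Fin n) → (s : Finset (Fin n)) → s.Nonempty → Fin n}

lemma foldG_outside (hpick : ∀ j s h, pick j s h ∈ s) (f : Word n) (L : List (Fin n)) :
    ∀ (S : Finset (Fin n)) (v : Word n),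
      (L.foldl (stepG pick f) (S, v)).1 ⊆ S ∧
        ∀ j, j ∉ S → (L.foldl (stepG pick f) (S, v)).2 j = v j := by
  induction L with
  | nil => intro S v; exact ⟨Finset.Subset.refl _, fun j _ => rfl⟩
  | cons a L ih =>
    intro S v
    by_cases h : S.Nonempty
    · have hk := hpick a S h
      have hst : stepG pick f (S, v) a
          = (S.erase (pick a S h), Function.update v (pick a S h) (f a)) := dif_pos h
      rw [List.foldl_cons, hst]
      obtain ⟨ih1, ih2⟩ := ih (S.erase (pick a S h)) (Function.update v (pick a S h) (f a))
      refine ⟨ih1.trans (Finset.erase_subset _ _), fun j hj => ?_⟩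
      rw [ih2 j (fun hj' => hj (Finset.mem_of_mem_erase hj'))]
      exact Function.update_of_ne (fun hjk : j = pick a S h => hj (hjk ▸ hk)) _ _
    · have hst : stepG pick f (S, v) a = (S, v) := dif_neg h
      rw [List.foldl_cons, hst]
      exact ih S v

lemma foldG_card (hpick : ∀ j s h, pick j s h ∈ s) (f : Word n) (L : List (Fin n)) :
    ∀ (S : Finset (Fin n)) (v : Word n), L.length ≤ S.card →
      (L.foldl (stepG pick f) (S, v)).1.card + L.length = S.card := by
  induction L with
  | nil => intro S v _; simp
  | cons a L ih =>
    intro S v hlen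
    have h : S.Nonempty := Finset.card_pos.mp (by simp at hlen; omega)
    have hk := hpick a S h
    have hst : stepG pick f (S, v) a
        = (S.erase (pick a S h), Function.update v (pick a S h) (f a)) := dif_pos h
    rw [List.foldl_cons, hst]
    have hec : (S.erase (pick a S h)).card = S.card - 1 := Finset.card_erase_of_mem hk
    have hlen' : L.length ≤ (S.erase (pick a S h)).card := by
      simp at hlen; omega
    have := ih (S.erase (pick a S h)) (Function.update v (pick a S h) (f a)) hlen'
    simp only [List.length_cons]
    simp at hlen
    omega

lemma foldG_insensitive (hpick : ∀ j s h, pick j s h ∈ s) (f : Word n) (L : List (Fin n)) :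
    ∀ (S : Finset (Fin n)) (v v' : Word n) (j : Fin n), j ∈ S →
      j ∉ (L.foldl (stepG pick f) (S, v)).1 →
      (L.foldl (stepG pick f) (S, v)).2 j = (L.foldl (stepG pick f) (S, v')).2 j := by
  induction L with
  | nil => intro S v v' j hjS hj; exact absurd hjS hj
  | cons a L ih =>
    intro S v v' j hjS hj
    by_cases h : S.Nonempty
    · have hk := hpick a S h
      have hst : ∀ w : Word n, stepG pick f (S, w) a
          = (S.erase (pick a S h), Function.update w (pick a S h) (f a)) := fun w => dif_pos h
      rw [List.foldl_cons, hst] at hj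
      rw [List.foldl_cons, hst, List.foldl_cons, hst]
      by_cases hjk : j = pick a S h
      · subst hjk
        rw [(foldG_outside hpick f L _ _).2 _ (Finset.notMem_erase _ _),
            (foldG_outside hpick f L _ _).2 _ (Finset.notMem_erase _ _)]
        simp
      · exact ih _ _ _ j (Finset.mem_erase.mpr ⟨hjk, hjS⟩) hj
    · exact absurd ⟨j, hjS⟩ h

lemma foldG_bound (f : Word n) (M : ℕ) (hf : ∀ j, f j ≤ M) (L : List (Fin n)) :
    ∀ (S : Finset (Fin n)) (v : Word n), (∀ j, v j ≤ M) →
      ∀ j, (L.foldl (stepG pick f) (S, v)).2 j ≤ M := by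
  induction L with
  | nil => intro S v hv j; exact hv j
  | cons a L ih =>
    intro S v hv j
    by_cases h : S.Nonempty
    · have hst : stepG pick f (S, v) a
          = (S.erase (pick a S h), Function.update v (pick a S h) (f a)) := dif_pos h
      rw [List.foldl_cons, hst]
      refine ih _ _ (fun j' => ?_) j
      rw [Function.update_apply]
      split
      · exact hf a
      · exact hv j'
    · have hst : stepG pick f (S, v) a = (S, v) := dif_neg h
      rw [List.foldl_cons, hst]
      exact ih S v hv j

/-- the mirror of a state under `rev`, with letters complemented to `c` -/
noncomputable def mirrorSt (c : ℕ) (st : Finset (Fin n) × Word n) : Finset (Fin n) × Word n :=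
  (st.1.image rev, fun j => c - st.2 (rev j))

lemma mirror_step (c : ℕ) (f g : Word n) (hfg : ∀ p, g (rev p) = c - f p)
    (st : Finset (Fin n) × Word n) (p : Fin n) :
    stepG pickL g (mirrorSt c st) (rev p) = mirrorSt c (stepG pickR f st p) := by
  obtain ⟨S, v⟩ := st
  by_cases h : S.Nonempty
  · have h' : (S.image rev).Nonempty := h.image _
    have e1 : stepG pickL g (mirrorSt c (S, v)) (rev p)
        = ((S.image rev).erase (pickL (rev p) (S.image rev) h'),
            Function.update (fun j => c - v (rev j)) (pickL (rev p) (S.image rev) h')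
              (g (rev p))) := dif_pos h'
    have e2 : stepG pickR f (S, v) p
        = (S.erase (pickR p S h), Function.update v (pickR p S h) (f p)) := dif_pos h
    rw [e1, e2]
    have hfl : pickL (rev p) (S.image rev) h' = rev (pickR p S h) := firstLeft_rev p S h h'
    rw [hfl]
    unfold mirrorSt
    refine Prod.ext ?_ ?_
    · exact (Finset.image_erase rev_injective S (pickR p S h)).symm
    · funext j
      simp only
      rw [Function.update_apply, Function.update_apply]
      by_cases hj : j = rev (pickR p S h)
      · rw [if_pos hj, if_pos (by rw [hj, rev_rev]), hfg]
      · rw [if_neg hj, if_neg (fun hh : rev j = pickR p S h => hj (by rw [← hh, rev_rev]))]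
  · have h' : ¬ (S.image rev).Nonempty := fun hne => h (by
      obtain ⟨x, hx⟩ := hne
      obtain ⟨y, hy, _⟩ := Finset.mem_image.mp hx
      exact ⟨y, hy⟩)
    have e1 : stepG pickL g (mirrorSt c (S, v)) (rev p) = mirrorSt c (S, v) := dif_neg h'
    have e2 : stepG pickR f (S, v) p = (S, v) := dif_neg h
    rw [e1, e2]

lemma mirror_fold (c : ℕ) (f g : Word n) (hfg : ∀ p, g (rev p) = c - f p) (L : List (Fin n)) :
    ∀ st : Finset (Fin n) × Word n,
      (L.map rev).foldl (stepG pickL g) (mirrorSt c st)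
        = mirrorSt c (L.foldl (stepG pickR f) st) := by
  induction L with
  | nil => intro st; rfl
  | cons a L ih =>
    intro st
    rw [List.map_cons, List.foldl_cons, List.foldl_cons, mirror_step c f g hfg st a, ih]

/-- the sorting permutation of the dual word is the `rev`-conjugate of that of `u` -/
lemma sort_dual (ℓ : ℕ) (u : Word n) (hu : ∀ p, 1 ≤ u p ∧ u p ≤ ℓ) :
    ∀ p, Tuple.sort (dualWord ℓ u) p = rev (Tuple.sort u (rev p)) := by
  set σ := Tuple.sort u with hσ
  obtain ⟨hmono, htie⟩ := Tuple.eq_sort_iff.mp hσ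
  set π : Equiv.Perm (Fin n) :=
    (Function.Involutive.toPerm rev rev_rev).trans
      (σ.trans (Function.Involutive.toPerm rev rev_rev)) with hπ
  have hπapp : ∀ p, π p = rev (σ (rev p)) := fun p => rfl
  have hw : ∀ p, dualWord ℓ u (π p) = ℓ + 1 - u (σ (rev p)) := by
    intro p
    rw [hπapp]
    unfold dualWord
    rw [rev_rev]
  have hmain : π = Tuple.sort (dualWord ℓ u) := by
    rw [Tuple.eq_sort_iff]
    constructor
    · intro p p' hpp'
      simp only [Function.comp_apply]
      rw [hw, hw]
      have h1 : rev p' ≤ rev p := by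
        rcases eq_or_lt_of_le hpp' with h | h
        · rw [h]
        · exact le_of_lt (rev_lt_rev h)
      exact Nat.sub_le_sub_left (hmono h1) _
    · intro p p' hpp' heq
      rw [hw, hw] at heq
      have hb1 := (hu (σ (rev p))).2
      have hb2 := (hu (σ (rev p'))).2
      have heq' : u (σ (rev p)) = u (σ (rev p')) := by omega
      have hlt : σ (rev p') < σ (rev p) := htie (rev p') (rev p) (rev_lt_rev hpp') heq'.symm
      rw [hπapp, hπapp]
      exact rev_lt_rev hlt
  intro p
  rw [← hmain, hπapp]

lemma map_rev_finRange : (List.finRange n).map rev = (List.finRange n).reverse := by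
  apply List.ext_getElem (by simp)
  intro i h1 h2
  simp only [List.length_map, List.length_finRange] at h1
  simp only [List.getElem_map, List.getElem_reverse, List.getElem_finRange,
    List.length_finRange]
  apply Fin.ext
  simp [rev]

lemma map_rev_take (m : ℕ) (hm : m ≤ n) :
    ((List.finRange n).take (n - m)).map rev = ((List.finRange n).drop m).reverse := by
  rw [List.map_take, map_rev_finRange, List.take_reverse, List.length_finRange]
  congr 2
  omega

lemma map_rev_rev (l : List (Fin n)) : (l.map rev).map rev = l := by
  rw [List.map_map]
  have : rev ∘ rev = (id : Fin n → Fin n) := funext rev_rev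
  rw [this, List.map_id]

lemma mem_dualQueue_rev (q : Finset (Fin n)) (i : Fin n) : rev i ∈ dualQueue q ↔ i ∉ q := by
  simp [dualQueue, rev_rev]

lemma dualQueue_image (q : Finset (Fin n)) : (dualQueue q).image rev = qᶜ := by
  ext j
  simp only [Finset.mem_image, Finset.mem_compl, dualQueue, Finset.mem_filter,
    Finset.mem_univ, true_and]
  constructor
  · rintro ⟨i, hi, rfl⟩; exact hi
  · intro hj; exact ⟨rev j, by rwa [rev_rev], rev_rev j⟩

lemma image_rev_q (q : Finset (Fin n)) : q.image rev = (dualQueue q)ᶜ := by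
  ext j
  simp only [Finset.mem_image, Finset.mem_compl, dualQueue, Finset.mem_filter,
    Finset.mem_univ, true_and, not_not]
  constructor
  · rintro ⟨i, hi, rfl⟩; rwa [rev_rev]
  · intro hj; exact ⟨rev j, hj, rev_rev j⟩

lemma dualQueue_card (q : Finset (Fin n)) : (dualQueue q).card = n - q.card := by
  have h1 : (dualQueue q).card = ((dualQueue q).image rev).card :=
    (Finset.card_image_of_injective _ rev_injective).symm
  rw [h1, dualQueue_image, Finset.card_compl, Fintype.card_fin]

/-- the queue algorithm, rewritten in terms of the generic step functions -/
lemma queueActWith_eq (q : Finset (Fin n)) (σ : Equiv.Perm (Fin n)) (u : Word n) :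
    queueActWith q σ u =
      ((((List.finRange n).drop q.card).reverse.map σ).foldl
        (stepG pickL (fun j => u j + 1))
        (qᶜ, ((((List.finRange n).take q.card).map σ).foldl (stepG pickR u)
          (q, fun _ => 0)).2)).2 := by
  unfold queueActWith
  rw [List.foldl_map, List.foldl_map]
  rfl

end ContraDualAux

/-- Contragredient duality: `(q(u))* = q*(u*)`, i.e. `q(u)_i = ℓ + 2 - q*(u*)_{n+1-i}`
for every site `i`, where `u` is a word with `ℓ` classes. -/
theorem contragredient_duality {n : ℕ} [NeZero n] (q : Finset (Fin n)) (ℓ : ℕ)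
    (u : Word n) (hu : ∀ p, 1 ≤ u p ∧ u p ≤ ℓ) (hℓ : ∃ p, u p = ℓ) :
    ∀ i : Fin n, act q u i = ℓ + 2 - act (dualQueue q) (dualWord ℓ u) (rev i) := by
  intro i
  classical
  set w := dualWord ℓ u with hwdef
  set Q := dualQueue q with hQdef
  set σ := Tuple.sort u with hσdef
  set τ := Tuple.sort w with hτdef
  set c := ℓ + 2 with hc
  have hkn : q.card ≤ n := by
    have := Finset.card_le_univ q
    simpa [Finset.card_univ] using this
  have hQcard : Q.card = n - q.card := dualQueue_card q
  have hQim : Q.image rev = qᶜ := dualQueue_image q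
  have hqim : q.image rev = Qᶜ := image_rev_q q
  have hQc_card : Qᶜ.card = q.card := by
    rw [Finset.card_compl, Fintype.card_fin, hQcard]; omega
  have hqc_card : qᶜ.card = n - q.card := by
    rw [Finset.card_compl, Fintype.card_fin]
  -- the site lists processed in the four phases
  set L2 : List (Fin n) := ((List.finRange n).take q.card).map σ with hL2
  set L1 : List (Fin n) := (((List.finRange n).drop q.card).reverse).map σ with hL1
  set M2 : List (Fin n) := ((List.finRange n).take (n - q.card)).map τ with hM2
  set M1 : List (Fin n) := (((List.finRange n).drop (n - q.card)).reverse).map τ with hM1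
  have hsort : ∀ p, τ p = rev (σ (rev p)) := sort_dual ℓ u hu
  have lm1 : M2.map rev = L1 := by
    rw [hM2, hL1, List.map_map]
    have h1 : rev ∘ τ = σ ∘ rev := funext (fun p => by
      simp only [Function.comp_apply]
      rw [hsort, rev_rev])
    rw [h1, ← List.map_map, map_rev_take q.card hkn]
  have lm2 : L2.map rev = M1 := by
    rw [hL2, hM1, List.map_map]
    have h1 : rev ∘ σ = τ ∘ rev := funext (fun p => by
      simp only [Function.comp_apply]
      rw [hsort (rev p), rev_rev])
    rw [h1, ← List.map_map]
    congr 1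
    have h2 := map_rev_take (n := n) (n - q.card) (by omega)
    rwa [Nat.sub_sub_self hkn] at h2
  -- lengths
  have lenL2 : L2.length = q.card := by
    simp [hL2, min_eq_left hkn]
  have lenL1 : L1.length = n - q.card := by simp [hL1]
  have lenM2 : M2.length = n - q.card := by simp [hM2]
  have lenM1 : M1.length = q.card := by
    simp [hM1]
    omega
  -- the four fold states
  set A2 := L2.foldl (stepG pickR u) (q, fun _ => 0) with hA2
  set A2' := L2.foldl (stepG pickR u) (q, fun _ => c) with hA2'
  set A1 := L1.foldl (stepG pickL (fun j => u j + 1)) (qᶜ, A2.2) with hA1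
  set A1' := L1.foldl (stepG pickL (fun j => u j + 1)) (qᶜ, fun _ => c) with hA1'
  set B2 := M2.foldl (stepG pickR w) (Q, fun _ => 0) with hB2
  set B1 := M1.foldl (stepG pickL (fun j => w j + 1)) (Qᶜ, B2.2) with hB1
  set B1' := M1.foldl (stepG pickL (fun j => w j + 1)) (Qᶜ, fun _ => 0) with hB1'
  have hactu : act q u = A1.2 := by
    rw [show act q u = queueActWith q σ u from rfl, queueActWith_eq q σ u]
  have hactw : act Q w = B1.2 := by
    rw [show act Q w = queueActWith Q τ w from rfl, queueActWith_eq Q τ w, hQcard]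
  -- bounds on letters
  have hub : ∀ p, u p ≤ ℓ := fun p => (hu p).2
  have hu1 : ∀ p, 1 ≤ u p := fun p => (hu p).1
  -- the two mirror identities
  have mir1 : A1' = mirrorSt c B2 := by
    have hfg : ∀ p, (fun j => u j + 1) (rev p) = c - w p := by
      intro p
      have h1 := hub (rev p); have h2 := hu1 (rev p)
      simp only [hwdef, dualWord, hc]
      omega
    have hm := mirror_fold c w (fun j => u j + 1) hfg M2 (Q, fun _ => 0)
    rw [lm1] at hm
    have hst : mirrorSt c (Q, fun _ => (0 : ℕ)) = ((qᶜ : Finset (Fin n)), fun _ => c) := by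
      unfold mirrorSt
      simp only
      rw [hQim]
      congr 1
    rw [hst] at hm
    rw [hA1', hB2, hm]
  have mir2 : B1' = mirrorSt c A2' := by
    have hfg : ∀ p, (fun j => w j + 1) (rev p) = c - u p := by
      intro p
      have h1 := hub p; have h2 := hu1 p
      simp only [hwdef, dualWord, rev_rev, hc]
      omega
    have hm := mirror_fold c u (fun j => w j + 1) hfg L2 (q, fun _ => c)
    rw [lm2] at hm
    have hst : mirrorSt c (q, fun _ => c) = ((Qᶜ : Finset (Fin n)), fun _ => (0 : ℕ)) := by
      unfold mirrorSt
      simp only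
      rw [hqim]
      congr 1
      funext j
      omega
    rw [hst] at hm
    rw [hB1', hA2', hm]
  -- bounds on the outputs
  have hbA2' : ∀ j, A2'.2 j ≤ c := by
    rw [hA2']
    exact foldG_bound u c (fun j => by have := hub j; omega) L2 q _ (fun _ => le_refl c)
  have hbB2 : ∀ j, B2.2 j ≤ c := by
    rw [hB2]
    refine foldG_bound w c (fun j => ?_) M2 Q _ (fun _ => by omega)
    simp only [hwdef, dualWord, hc]
    omega
  have hmem : rev i ∈ Q ↔ i ∉ q := mem_dualQueue_rev q i
  by_cases hiq : i ∈ q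
  · -- i ∈ q : the value is assigned in Phase II of the original algorithm
    have hiqc : i ∉ qᶜ := by simp [hiq]
    have h1 : act q u i = A2.2 i := by
      rw [hactu, hA1]
      exact (foldG_outside pickL_mem _ L1 qᶜ A2.2).2 i hiqc
    have hA2card := foldG_card pickR_mem u L2 q (fun _ => 0) (le_of_eq lenL2)
    have hA2empty : i ∉ A2.1 := by
      have h0 : A2.1.card = 0 := by rw [← hA2] at hA2card; omega
      rw [Finset.card_eq_zero] at h0
      rw [h0]
      exact Finset.notMem_empty i
    have h2 : A2.2 i = A2'.2 i := by
      rw [hA2, hA2']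
      exact foldG_insensitive pickR_mem u L2 q _ _ i hiq (hA2 ▸ hA2empty)
    have hriQc : rev i ∈ Qᶜ := by
      rw [Finset.mem_compl, hmem]
      simp [hiq]
    have hB1card := foldG_card pickL_mem (fun j => w j + 1) M1 Qᶜ B2.2
      (by rw [lenM1, hQc_card])
    have hB1empty : rev i ∉ B1.1 := by
      have h0 : B1.1.card = 0 := by rw [← hB1] at hB1card; rw [lenM1, hQc_card] at hB1card; omega
      rw [Finset.card_eq_zero] at h0
      rw [h0]
      exact Finset.notMem_empty _
    have h3 : act Q w (rev i) = B1'.2 (rev i) := by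
      rw [hactw, hB1, hB1']
      exact foldG_insensitive pickL_mem _ M1 Qᶜ _ _ _ hriQc (hB1 ▸ hB1empty)
    have h4 : B1'.2 (rev i) = c - A2'.2 i := by
      rw [mir2]
      unfold mirrorSt
      simp only
      rw [rev_rev]
    have hle := hbA2' i
    rw [h1, h2, h3, h4]
    omega
  · -- i ∉ q : the value is assigned in Phase I of the original algorithm
    have hiqc : i ∈ qᶜ := Finset.mem_compl.mpr hiq
    have hA1card := foldG_card pickL_mem (fun j => u j + 1) L1 qᶜ A2.2
      (by rw [lenL1, hqc_card])
    have hA1empty : i ∉ A1.1 := by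
      have h0 : A1.1.card = 0 := by
        rw [← hA1] at hA1card; rw [lenL1, hqc_card] at hA1card; omega
      rw [Finset.card_eq_zero] at h0
      rw [h0]
      exact Finset.notMem_empty _
    have h1 : act q u i = A1'.2 i := by
      rw [hactu, hA1, hA1']
      exact foldG_insensitive pickL_mem _ L1 qᶜ _ _ i hiqc (hA1 ▸ hA1empty)
    have h2 : A1'.2 i = c - B2.2 (rev i) := by
      rw [mir1]
      unfold mirrorSt
      simp only
    have hriQ : rev i ∉ Qᶜ := by
      rw [Finset.mem_compl, not_not, hmem]
      exact hiq
    have h3 : act Q w (rev i) = B2.2 (rev i) := by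
      rw [hactw, hB1]
      exact (foldG_outside pickL_mem _ M1 Qᶜ B2.2).2 _ hriQ
    have hle := hbB2 (rev i)
    rw [h1, h2, h3]


end MLQ
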